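/- arXiv:math/0211304 — 6 statements merged into one kernel-verified Lean document; each statement's English description precedes it below -/
import Mathlib

section
/- In ℂ[s,t,x,y] the polynomials a₁,…,a₅ satisfy the cubic relation a₃² − a₁a₃a₄ + a₂a₄² + a₁²a₅ − 4a₂a₅ = 0 (this is the affine form, with a₆ = 1, of the cubic hypersurface F ⊂ ℙ⁵ cut out by the image of the map φ of Lemma 3.1; it is the equation (3) of the paper with the misprinted term a₁²a₄ corrected to a₁²a₅). -/
noncomputable section
namespace Koike

open MvPolynomial

abbrev R4 : Type := MvPolynomial (Fin 4) ℂ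

def s : R4 := X 0
def t : R4 := X 1
def x : R4 := X 2
def y : R4 := X 3

/-- the imaginary unit as a constant polynomial -/
def i : R4 := C Complex.I

def a1 : R4 := s + t + x + y
def a2 : R4 := s*t + t*x + x*y + y*s
def a3 : R4 := t*x*y + s*x*y + s*t*y + s*t*x
def a4 : R4 := s*x + t*y
def a5 : R4 := s*t*x*y
def a6 : R4 := 1

def b1 : R4 := s - t + x - y
def b2 : R4 := s*t - t*x + x*y - y*s
def b3 : R4 := t*x*y - s*x*y + s*t*y - s*t*x
def b4 : R4 := s*x - t*y

def c1 : R4 := s - i*t - x + i*y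
def c2 : R4 := s*t - i*(t*x) - x*y + i*(y*s)
def c3 : R4 := t*x*y - i*(s*x*y) - s*t*y + i*(s*t*x)

def d1 : R4 := s + i*t - x - i*y
def d2 : R4 := s*t + i*(t*x) - x*y - i*(y*s)
def d3 : R4 := t*x*y + i*(s*x*y) - s*t*y - i*(s*t*x)

/-- the pullback `σ* : ℂ[s,t,x,y] → ℂ[s,t,x,y]`, determined by
`s ↦ y, t ↦ s, x ↦ t, y ↦ x`. -/
def sigmaStar : R4 →ₐ[ℂ] R4 := aeval ![y, s, t, x]

/-- the pullback `τ* : ℂ[s,t,x,y] → ℂ[s,t,x,y]`, determined by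
`s ↦ x, t ↦ t, x ↦ s, y ↦ y`. -/
def tauStar : R4 →ₐ[ℂ] R4 := aeval ![x, t, s, y]
/-- The cubic relation satisfied by `a₁,…,a₅` (affine form, `a₆ = 1`). -/
theorem stmt_6 :
    a3^2 - a1*a3*a4 + a2*a4^2 + a1^2*a5 - 4*a2*a5 = 0 := by
  unfold a1 a2 a3 a4 a5 s t x y; ring

end Koike
end
end

section
/- In ℂ[s,t,x,y] the identity c₂d₂ = a₂² − 2a₁a₃ + 2a₂a₄ holds (equation (9) of the paper). -/
noncomputable section
namespace Koike

open MvPolynomial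

/-- `c₂d₂ = a₂² − 2a₁a₃ + 2a₂a₄`. -/
theorem stmt_10 : c2 * d2 = a2^2 - 2*a1*a3 + 2*a2*a4 := by
  have hi : i * i = -1 := by
    simp [i, ← C_mul, Complex.I_mul_I]
  unfold c2 d2 a1 a2 a3 a4
  ring_nf
  linear_combination (s*t*x*y - t^2*x^2 - s^2*y^2 + s*t*x*y) * hi

end Koike
end
end

section
/- In ℂ[s,t,x,y] the following two identities hold (equation (9) of the paper with a₆ = 1): c₁d₂ − i·c₂d₁ = (1−i)·(a₁a₂ − 4a₃), and c₁d₂ + i·c₂d₁ = (1+i)·b₁b₂. -/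
noncomputable section
namespace Koike

open MvPolynomial

lemma hi : i * i = -1 := by
  unfold i
  rw [← C_mul, Complex.I_mul_I, map_neg, map_one]

/-- `c₁d₂ − i c₂d₁ = (1−i)(a₁a₂ − 4a₃)` and `c₁d₂ + i c₂d₁ = (1+i) b₁b₂`
(with `a₆ = 1`). -/
theorem stmt_13 :
    c1*d2 - i * (c2*d1) = (1 - i) * (a1*a2 - 4*a3) ∧
    c1*d2 + i * (c2*d1) = (1 + i) * (b1*b2) := by
  unfold a1 a2 a3 b1 b2 c1 c2 d1 d2
  constructor
  · linear_combination (i*(t^2*x - t*x*y - s*t*y + s*y^2)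
      + (-t^2*x + 2*s*t*y + 2*t*x*y - s*y^2 - s*t^2 + s*t*x - t*x^2 - x*y^2 - s^2*y + s*x*y)) * hi
  · linear_combination (i*(-t^2*x + t*x*y + s*t*y - s*y^2)
      + (-t^2*x - s*y^2 + s*t^2 - s*t*x + t*x^2 + x*y^2 + s^2*y - s*x*y)) * hi

end Koike
end
end

section
/- In ℂ[s,t,x,y] the following two identities hold (equation (9) of the paper): c₂d₃ + i·c₃d₂ = (1+i)·(−a₂a₃ + 4a₁a₅), and −i·(c₂d₃ − i·c₃d₂) = (1+i)·b₂b₃. -/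
noncomputable section
namespace Koike

open MvPolynomial

set_option maxHeartbeats 2000000 in
/-- `c₂d₃ + i c₃d₂ = (1+i)(−a₂a₃ + 4a₁a₅)` and `−i(c₂d₃ − i c₃d₂) = (1+i) b₂b₃`. -/
theorem stmt_14 :
    c2*d3 + i * (c3*d2) = (1 + i) * (-(a2*a3) + 4*a1*a5) ∧
    -i * (c2*d3 - i * (c3*d2)) = (1 + i) * (b2*b3) := by
  have h : i * i = -1 := by
    simp only [i, ← C_mul, Complex.I_mul_I, map_neg, map_one]
  constructor
  · simp only [c2, d3, c3, d2, a1, a2, a3, a5]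
    linear_combination (- s*t*x*x*y*i + s*s*x*y*y*i + s*t*t*x*x*i - s*s*t*x*y*i - 2*s*t*x*x*y + s*t*t*x*x + s*s*x*y*y - 2*s*s*t*x*y + t*t*x*x*y - s*t*x*y*y + s*x*x*y*y - s*t*t*x*y + s*s*t*y*y + s*s*t*t*x) * h
  · simp only [c2, d3, c3, d2, b2, b3]
    linear_combination (- s*t*x*x*y*i*i + s*s*x*y*y*i*i + s*t*t*x*x*i*i - s*s*t*x*y*i*i - s*t*t*x*x*i - s*s*x*y*y*i + t*t*x*x*y*i - s*t*x*y*y*i + s*x*x*y*y*i - s*t*t*x*y*i + s*s*t*y*y*i + s*s*t*t*x*i + s*s*t*t*x + t*t*x*x*y + s*x*x*y*y + s*s*t*y*y - t*x*x*y*y - s*s*t*t*y - s*s*x*y*y - s*t*t*x*x) * h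

end Koike
end
end

section
/- For every choice of coefficients A₁,A₂,A₃,B₁,B₂,B₃,C₁,C₂,C₃ ∈ ℂ, set f₁ = a₄ − (A₁a₁ + A₂a₂ + A₃a₃), f₂ = a₅ − (B₁a₁ + B₂a₂ + B₃a₃), f₃ = 1 − (C₁a₁ + C₂a₂ + C₃a₃) in ℂ[s,t,x,y]. Then there exists a nonzero tuple (μ₁,…,μ₇) ∈ ℂ⁷ such that μ₁b₁² + μ₂b₂² + μ₃b₃² + μ₄b₁b₃ + μ₅b₁b₄ + μ₆b₃b₄ + μ₇b₄² lies in the ideal of ℂ[s,t,x,y] generated by f₁, f₂, f₃. (This produces the unique vanishing quadric Q on the genus-4 quotient curve Z.) -/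
set_option maxRecDepth 10000
set_option maxHeartbeats 2000000


noncomputable section
namespace Koike

open MvPolynomial

/-- For every choice of coefficients, some nontrivial linear combination of the
seven products `b₁², b₂², b₃², b₁b₃, b₁b₄, b₃b₄, b₄²` lies in the ideal
generated by `f₁, f₂, f₃`: the unique vanishing quadric `Q`. -/
theorem stmt_15 (A1 A2 A3 B1 B2 B3 C1 C2 C3 : ℂ) :
    ∃ μ : Fin 7 → ℂ, μ ≠ 0 ∧
      C (μ 0) * b1^2 + C (μ 1) * b2^2 + C (μ 2) * b3^2 +
        C (μ 3) * (b1*b3) + C (μ 4) * (b1*b4) + C (μ 5) * (b3*b4) +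
        C (μ 6) * b4^2 ∈
      Ideal.span {a4 - (C A1 * a1 + C A2 * a2 + C A3 * a3),
                  a5 - (C B1 * a1 + C B2 * a2 + C B3 * a3),
                  1 - (C C1 * a1 + C C2 * a2 + C C3 * a3)} := by
  set v : Fin 7 → Fin 6 → ℂ :=
    ![![1, -4*C2, 0, -4*C1, 0, -4*C3],
      ![16*B1*C1, 1+4*A2+16*B2*C2, 16*B3*C3, 4*A1+16*(B1*C2+B2*C1),
        -4+16*(B1*C3+B3*C1), 4*A3+16*(B2*C3+B3*C2)],
      ![0, -4*B2, 1, -4*B1, 0, -4*B3],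
      ![0, -2*A2, 0, -2*A1, 1, -2*A3],
      ![A1, 0, -2*C3, A2, A3-2*C1, -2*C2],
      ![2*B1, 0, -A3, 2*B2, 2*B3-A1, -A2],
      ![A1^2-4*B1*C1, A2^2-4*B2*C2, A3^2-4*B3*C3, 2*A1*A2-4*(B1*C2+B2*C1),
        2*A1*A3-4*(B1*C3+B3*C1), 2*A2*A3-4*(B2*C3+B3*C2)]] with hv
  have hni : ¬ LinearIndependent ℂ v := by
    intro h
    have := h.fintype_card_le_finrank
    simp [Module.finrank_pi] at this
  obtain ⟨μ, hsum, k, hk⟩ := Fintype.not_linearIndependent_iff.mp hni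
  refine ⟨μ, fun h0 => hk (by simp [h0]), ?_⟩
  have hj : ∀ j : Fin 6,
      μ 0 * v 0 j + μ 1 * v 1 j + μ 2 * v 2 j + μ 3 * v 3 j + μ 4 * v 4 j +
        μ 5 * v 5 j + μ 6 * v 6 j = 0 := by
    intro j
    have := congrFun hsum j
    simpa [Fin.sum_univ_seven] using this
  have hC : ∀ {z : ℂ}, z = 0 → (C z : R4) = 0 := fun h => by rw [h]; exact map_zero _
  have h0 : (C (μ 0 * (1) + μ 1 * (16*B1*C1) + μ 2 * (0) + μ 3 * (0) + μ 4 * (A1) + μ 5 * (2*B1) + μ 6 * (A1^2-4*B1*C1)) : R4) = 0 := hC (hj 0)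
  have h1 : (C (μ 0 * (-4*C2) + μ 1 * (1+4*A2+16*B2*C2) + μ 2 * (-4*B2) + μ 3 * (-2*A2) + μ 4 * (0) + μ 5 * (0) + μ 6 * (A2^2-4*B2*C2)) : R4) = 0 := hC (hj 1)
  have h2 : (C (μ 0 * (0) + μ 1 * (16*B3*C3) + μ 2 * (1) + μ 3 * (0) + μ 4 * (-2*C3) + μ 5 * (-A3) + μ 6 * (A3^2-4*B3*C3)) : R4) = 0 := hC (hj 2)
  have h3 : (C (μ 0 * (-4*C1) + μ 1 * (4*A1+16*(B1*C2+B2*C1)) + μ 2 * (-4*B1) + μ 3 * (-2*A1) + μ 4 * (A2) + μ 5 * (2*B2) + μ 6 * (2*A1*A2-4*(B1*C2+B2*C1))) : R4) = 0 := hC (hj 3)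
  have h4 : (C (μ 0 * (0) + μ 1 * (-4+16*(B1*C3+B3*C1)) + μ 2 * (0) + μ 3 * (1) + μ 4 * (A3-2*C1) + μ 5 * (2*B3-A1) + μ 6 * (2*A1*A3-4*(B1*C3+B3*C1))) : R4) = 0 := hC (hj 4)
  have h5 : (C (μ 0 * (-4*C3) + μ 1 * (4*A3+16*(B2*C3+B3*C2)) + μ 2 * (-4*B3) + μ 3 * (-2*A3) + μ 4 * (-2*C2) + μ 5 * (-A2) + μ 6 * (2*A2*A3-4*(B2*C3+B3*C2))) : R4) = 0 := hC (hj 5)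
  simp only [map_add, map_mul, map_sub, map_neg, map_pow, map_ofNat, map_one, map_zero]
    at h0 h1 h2 h3 h4 h5
  set f1 : R4 := a4 - (C A1 * a1 + C A2 * a2 + C A3 * a3) with hf1
  set f2 : R4 := a5 - (C B1 * a1 + C B2 * a2 + C B3 * a3) with hf2
  set f3 : R4 := (1 : R4) - (C C1 * a1 + C C2 * a2 + C C3 * a3) with hf3
  have hmem1 : f1 ∈ Ideal.span {f1, f2, f3} := Ideal.subset_span (by simp)
  have hmem2 : f2 ∈ Ideal.span {f1, f2, f3} := Ideal.subset_span (by simp)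
  have hmem3 : f3 ∈ Ideal.span {f1, f2, f3} := Ideal.subset_span (by simp)
  have e1 : b1^2 = a1^2 - 4*C C1*(a1*a2) - 4*C C2*a2^2 - 4*C C3*(a2*a3) - 4*a2*f3 := by
    rw [hf3]; unfold a1 a2 a3 b1 s t x y; ring
  have e2 : b2^2 = 16*C B1*C C1*a1^2 + (1+4*C A2+16*C B2*C C2)*a2^2 + 16*C B3*C C3*a3^2
      + (4*C A1+16*(C B1*C C2+C B2*C C1))*(a1*a2)
      + (-4+16*(C B1*C C3+C B3*C C1))*(a1*a3)
      + (4*C A3+16*(C B2*C C3+C B3*C C2))*(a2*a3)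
      + 4*a2*f1 + 16*f2 + 16*(C B1*a1+C B2*a2+C B3*a3)*f3 := by
    rw [hf1, hf2, hf3]; unfold a1 a2 a3 a4 a5 b2 s t x y; ring
  have e3 : b3^2 = -(4*C B2*a2^2) + a3^2 - 4*C B1*(a1*a2) - 4*C B3*(a2*a3) - 4*a2*f2 := by
    rw [hf2]; unfold a1 a2 a3 a5 b3 s t x y; ring
  have e4 : b1*b3 = -(2*C A2*a2^2) - 2*C A1*(a1*a2) + a1*a3 - 2*C A3*(a2*a3) - 2*a2*f1 := by
    rw [hf1]; unfold a1 a2 a3 a4 b1 b3 s t x y; ring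
  have e5 : b1*b4 = C A1*a1^2 - 2*C C3*a3^2 + C A2*(a1*a2) + (C A3 - 2*C C1)*(a1*a3)
      - 2*C C2*(a2*a3) + a1*f1 - 2*a3*f3 := by
    rw [hf1, hf3]; unfold a1 a2 a3 a4 b1 b4 s t x y; ring
  have e6 : b3*b4 = 2*C B1*a1^2 - C A3*a3^2 + 2*C B2*(a1*a2) + (2*C B3 - C A1)*(a1*a3)
      - C A2*(a2*a3) - a3*f1 + 2*a1*f2 := by
    rw [hf1, hf2]; unfold a1 a2 a3 a4 a5 b3 b4 s t x y; ring
  have e7 : b4^2 = (C A1^2-4*C B1*C C1)*a1^2 + (C A2^2-4*C B2*C C2)*a2^2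
      + (C A3^2-4*C B3*C C3)*a3^2
      + (2*C A1*C A2-4*(C B1*C C2+C B2*C C1))*(a1*a2)
      + (2*C A1*C A3-4*(C B1*C C3+C B3*C C1))*(a1*a3)
      + (2*C A2*C A3-4*(C B2*C C3+C B3*C C2))*(a2*a3)
      + ((C A1*a1+C A2*a2+C A3*a3) + a4)*f1 - 4*f2 - 4*(C B1*a1+C B2*a2+C B3*a3)*f3 := by
    rw [hf1, hf2, hf3]; unfold a1 a2 a3 a4 a5 b4 s t x y; ring
  have hid : C (μ 0) * b1^2 + C (μ 1) * b2^2 + C (μ 2) * b3^2 +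
        C (μ 3) * (b1*b3) + C (μ 4) * (b1*b4) + C (μ 5) * (b3*b4) +
        C (μ 6) * b4^2 =
      (C (μ 4) * a1 + (4 * C (μ 1) - 2 * C (μ 3)) * a2 - C (μ 5) * a3 +
        C (μ 6) * ((C A1 * a1 + C A2 * a2 + C A3 * a3) + a4)) * f1 +
      (16 * C (μ 1) - 4 * C (μ 6) + 2 * C (μ 5) * a1 - 4 * C (μ 2) * a2) * f2 +
      (-(4 * C (μ 0) * a2) - 2 * C (μ 4) * a3 +
        (16 * C (μ 1) - 4 * C (μ 6)) * (C B1 * a1 + C B2 * a2 + C B3 * a3)) * f3 := by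
    rw [e1, e2, e3, e4, e5, e6, e7]
    linear_combination h0 * a1^2 + h1 * a2^2 + h2 * a3^2 + h3 * (a1*a2) +
      h4 * (a1*a3) + h5 * (a2*a3)
  rw [hid]
  exact Ideal.add_mem _ (Ideal.add_mem _ (Ideal.mul_mem_left _ _ hmem1)
    (Ideal.mul_mem_left _ _ hmem2)) (Ideal.mul_mem_left _ _ hmem3)

end Koike
end
end

section
/- Let s₀,s₁,t₀,t₁,x₀,x₁,y₀,y₁ ∈ ℂ be such that (s₀,s₁) ≠ (0,0), (t₀,t₁) ≠ (0,0), (x₀,x₁) ≠ (0,0), and (y₀,y₁) ≠ (0,0). Then the six values A₁, A₂, A₃, A₄, A₅, A₆ evaluated at (s₀,s₁,t₀,t₁,x₀,x₁,y₀,y₁) are not all zero. (Hence the linear system V(1) spanned by a₁,…,a₆ is base point free on (ℙ¹)⁴, so it defines a morphism φ : (ℙ¹)⁴ → ℙ⁵.) -/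
private lemma cancel19 {a b : ℂ} (ha : a ≠ 0) (h : a * b = 0) : b = 0 :=
  (mul_eq_zero.mp h).resolve_left ha

/-- Key case: the system specialized at `s0 = 0`, after dividing by `s1 ≠ 0`,
in variables `t, x, y`. -/
private lemma key19 (t0 t1 x0 x1 y0 y1 : ℂ)
    (ht : ¬(t0 = 0 ∧ t1 = 0)) (hx : ¬(x0 = 0 ∧ x1 = 0)) (hy : ¬(y0 = 0 ∧ y1 = 0))
    (h1 : t0*x0*y0 = 0)
    (h2 : t1*x0*y0 + t0*x0*y1 = 0)
    (h3 : t0*x1*y1 + t1*x0*y1 + t1*x1*y0 = 0)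
    (h4 : t0*x1*y0 = 0)
    (h5 : t1*x1*y1 = 0) : False := by
  by_cases ht0 : t0 = 0
  · have ht1 : t1 ≠ 0 := fun h => ht ⟨ht0, h⟩
    subst ht0
    have e2 : x0*y0 = 0 := cancel19 ht1 (by linear_combination h2)
    have e3 : x0*y1 + x1*y0 = 0 := cancel19 ht1 (by linear_combination h3)
    have e5 : x1*y1 = 0 := cancel19 ht1 (by linear_combination h5)
    by_cases hx0 : x0 = 0
    · have hx1 : x1 ≠ 0 := fun h => hx ⟨hx0, h⟩
      have hy0 : y0 = 0 := cancel19 hx1 (by linear_combination e3 - y1*hx0)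
      have hy1 : y1 = 0 := cancel19 hx1 e5
      exact hy ⟨hy0, hy1⟩
    · have hy0 : y0 = 0 := cancel19 hx0 e2
      have hy1 : y1 = 0 := cancel19 hx0 (by linear_combination e3 - x1*hy0)
      exact hy ⟨hy0, hy1⟩
  · have e1 : x0*y0 = 0 := cancel19 ht0 (by linear_combination h1)
    have e4 : x1*y0 = 0 := cancel19 ht0 (by linear_combination h4)
    by_cases hy0 : y0 = 0
    · have hy1 : y1 ≠ 0 := fun h => hy ⟨hy0, h⟩
      have hx0 : x0 = 0 := by
        have h' : t0*x0*y1 = 0 := by linear_combination h2 - t1*x0*hy0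
        have h'' : t0*x0 = 0 := (mul_eq_zero.mp h').resolve_right hy1
        exact cancel19 ht0 h''
      have hx1 : x1 ≠ 0 := fun h => hx ⟨hx0, h⟩
      have h' : t0*x1*y1 = 0 := by linear_combination h3 - t1*y1*hx0 - t1*x1*hy0
      exact hy1 ((mul_eq_zero.mp h').resolve_left (mul_ne_zero ht0 hx1))
    · have hx0 : x0 = 0 := (mul_eq_zero.mp e1).resolve_right hy0
      have hx1 : x1 = 0 := (mul_eq_zero.mp e4).resolve_right hy0
      exact hx ⟨hx0, hx1⟩

/-- The forms `A₁,…,A₆` (the homogeneous versions of `a₁,…,a₆`) have no common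
zero with all four coordinate pairs nonzero: the linear system `V(1)` is base
point free on `(ℙ¹)⁴`. -/
theorem stmt_19 (s0 s1 t0 t1 x0 x1 y0 y1 : ℂ)
    (hs : ¬(s0 = 0 ∧ s1 = 0)) (ht : ¬(t0 = 0 ∧ t1 = 0))
    (hx : ¬(x0 = 0 ∧ x1 = 0)) (hy : ¬(y0 = 0 ∧ y1 = 0)) :
    ¬(s1*t0*x0*y0 + s0*t1*x0*y0 + s0*t0*x1*y0 + s0*t0*x0*y1 = 0 ∧
      s1*t1*x0*y0 + s0*t1*x1*y0 + s0*t0*x1*y1 + s1*t0*x0*y1 = 0 ∧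
      s0*t1*x1*y1 + s1*t0*x1*y1 + s1*t1*x0*y1 + s1*t1*x1*y0 = 0 ∧
      s1*t0*x1*y0 + s0*t1*x0*y1 = 0 ∧
      s1*t1*x1*y1 = 0 ∧
      s0*t0*x0*y0 = 0) := by
  rintro ⟨h1, h2, h3, h4, h5, h6⟩
  have h6' := mul_eq_zero.mp h6
  rcases h6' with h6' | hy0
  · rcases mul_eq_zero.mp h6' with h6'' | hx0
    · rcases mul_eq_zero.mp h6'' with hs0 | ht0
      · -- s0 = 0
        have hs1 : s1 ≠ 0 := fun h => hs ⟨hs0, h⟩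
        subst hs0
        exact key19 t0 t1 x0 x1 y0 y1 ht hx hy
          (cancel19 hs1 (by linear_combination h1))
          (cancel19 hs1 (by linear_combination h2))
          (cancel19 hs1 (by linear_combination h3))
          (cancel19 hs1 (by linear_combination h4))
          (cancel19 hs1 (by linear_combination h5))
      · -- t0 = 0 : apply key with the symmetry (s t)(x y)
        have ht1 : t1 ≠ 0 := fun h => ht ⟨ht0, h⟩
        subst ht0
        exact key19 s0 s1 y0 y1 x0 x1 hs hy hx
          (cancel19 ht1 (by linear_combination h1))
          (cancel19 ht1 (by linear_combination h2))
          (cancel19 ht1 (by linear_combination h3))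
          (cancel19 ht1 (by linear_combination h4))
          (cancel19 ht1 (by linear_combination h5))
    · -- x0 = 0 : apply key with the symmetry (s x)(t y)
      have hx1 : x1 ≠ 0 := fun h => hx ⟨hx0, h⟩
      subst hx0
      exact key19 y0 y1 s0 s1 t0 t1 hy hs ht
        (cancel19 hx1 (by linear_combination h1))
        (cancel19 hx1 (by linear_combination h2))
        (cancel19 hx1 (by linear_combination h3))
        (cancel19 hx1 (by linear_combination h4))
        (cancel19 hx1 (by linear_combination h5))
  · -- y0 = 0 : apply key with the symmetry (s y)(t x)
    have hy1 : y1 ≠ 0 := fun h => hy ⟨hy0, h⟩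
    subst hy0
    exact key19 x0 x1 t0 t1 s0 s1 hx ht hs
      (cancel19 hy1 (by linear_combination h1))
      (cancel19 hy1 (by linear_combination h2))
      (cancel19 hy1 (by linear_combination h3))
      (cancel19 hy1 (by linear_combination h4))
      (cancel19 hy1 (by linear_combination h5))
end
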